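/- Let Δ be the probability simplex on a finite nonempty set U. The negative entropy function Ω(δ) = ∑_{u∈U} δ(u) ln δ(u) (with 0 ln 0 = 0) is 1-strongly convex on Δ with respect to the ℓ¹-norm; that is, for all δ, ξ ∈ Δ and t ∈ [0,1], Ω(tδ + (1−t)ξ) ≤ tΩ(δ) + (1−t)Ω(ξ) − (t(1−t)/2)‖δ − ξ‖₁². -/

import Mathlib

open Real Set

noncomputable def myPsi (x : ℝ) : ℝ := (x + 1) * Real.log x - 2 * (x - 1)

noncomputable def myPhi (x : ℝ) : ℝ :=
  (x + 2) * (x * Real.log x - x + 1) - (3 / 2) * (x - 1) ^ 2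

lemma myPsi_hasDerivAt {x : ℝ} (hx : 0 < x) :
    HasDerivAt myPsi (Real.log x + 1 / x - 1) x := by
  have h1 : HasDerivAt (fun y : ℝ => (y + 1) * Real.log y)
      (1 * Real.log x + (x + 1) * x⁻¹) x :=
    ((hasDerivAt_id x).add_const 1).mul (Real.hasDerivAt_log hx.ne')
  have h2 : HasDerivAt (fun y : ℝ => 2 * (y - 1)) 2 x := by
    simpa using ((hasDerivAt_id x).sub_const 1).const_mul 2
  have := h1.sub h2
  refine this.congr_deriv ?_
  field_simp
  ring

lemma inner_hasDerivAt {x : ℝ} (hx : 0 < x) :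
    HasDerivAt (fun y : ℝ => y * Real.log y - y + 1) (Real.log x) x := by
  have ha := (((hasDerivAt_id x).mul (Real.hasDerivAt_log hx.ne')).sub
      (hasDerivAt_id x)).add_const 1
  refine ha.congr_deriv ?_
  simp [id]
  field_simp
  ring

lemma myPhi_hasDerivAt {x : ℝ} (hx : 0 < x) :
    HasDerivAt myPhi (2 * myPsi x) x := by
  have h1 := ((hasDerivAt_id x).add_const 2).mul (inner_hasDerivAt hx)
  have h2 : HasDerivAt (fun y : ℝ => (3 / 2 : ℝ) * (y - 1) ^ 2) (3 * (x - 1)) x := by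
    have := (((hasDerivAt_id x).sub_const 1).pow 2).const_mul (3 / 2 : ℝ)
    refine this.congr_deriv ?_
    simp [id]
    ring
  have := h1.sub h2
  refine this.congr_deriv ?_
  simp only [myPsi, id]
  ring

lemma myPsi_mono : MonotoneOn myPsi (Set.Ioi (0 : ℝ)) := by
  apply monotoneOn_of_deriv_nonneg (convex_Ioi 0)
  · exact fun x hx => (myPsi_hasDerivAt hx).continuousAt.continuousWithinAt
  · intro x hx
    rw [interior_Ioi] at hx
    exact (myPsi_hasDerivAt hx).differentiableAt.differentiableWithinAt
  · intro x hx
    rw [interior_Ioi] at hx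
    rw [(myPsi_hasDerivAt hx).deriv]
    have hx' : (0:ℝ) < x := hx
    have h := Real.log_le_sub_one_of_pos (show (0:ℝ) < 1 / x by positivity)
    rw [one_div, Real.log_inv] at h
    have : 1 / x = x⁻¹ := one_div x
    linarith [h]

lemma myPsi_one : myPsi 1 = 0 := by simp [myPsi]

lemma myPhi_one : myPhi 1 = 0 := by simp [myPhi]

lemma myPhi_nonneg {x : ℝ} (hx : 0 < x) : 0 ≤ myPhi x := by
  rcases le_total x 1 with h | h
  · have anti : AntitoneOn myPhi (Set.Ioc (0:ℝ) 1) := by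
      apply antitoneOn_of_deriv_nonpos (convex_Ioc 0 1)
      · exact fun y hy => (myPhi_hasDerivAt hy.1).continuousAt.continuousWithinAt
      · intro y hy
        rw [interior_Ioc] at hy
        exact (myPhi_hasDerivAt hy.1).differentiableAt.differentiableWithinAt
      · intro y hy
        rw [interior_Ioc] at hy
        rw [(myPhi_hasDerivAt hy.1).deriv]
        have := myPsi_mono (Set.mem_Ioi.2 hy.1) (Set.mem_Ioi.2 one_pos) hy.2.le
        rw [myPsi_one] at this
        linarith
    have := anti ⟨hx, h⟩ ⟨one_pos, le_refl 1⟩ h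
    rwa [myPhi_one] at this
  · have mono : MonotoneOn myPhi (Set.Ici (1:ℝ)) := by
      apply monotoneOn_of_deriv_nonneg (convex_Ici 1)
      · exact fun y hy => (myPhi_hasDerivAt (lt_of_lt_of_le one_pos hy)).continuousAt.continuousWithinAt
      · intro y hy
        rw [interior_Ici] at hy
        exact (myPhi_hasDerivAt (lt_trans one_pos hy)).differentiableAt.differentiableWithinAt
      · intro y hy
        rw [interior_Ici] at hy
        rw [(myPhi_hasDerivAt (lt_trans one_pos hy)).deriv]
        have := myPsi_mono (Set.mem_Ioi.2 one_pos) (Set.mem_Ioi.2 (lt_trans one_pos hy)) hy.le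
        rw [myPsi_one] at this
        linarith
    have := mono (Set.mem_Ici.2 (le_refl 1)) (Set.mem_Ici.2 h) h
    rwa [myPhi_one] at this

lemma pointwise_pinsker {a b : ℝ} (ha : 0 ≤ a) (hb : 0 ≤ b) (hab : b = 0 → a = 0) :
    (a - b) ^ 2 ≤ (2 / 3) * (a + 2 * b) *
      (a * (Real.log a - Real.log b) - a + b) := by
  rcases eq_or_lt_of_le hb with hb0 | hb0
  · have ha0 := hab hb0.symm
    simp [← hb0, ha0]
  rcases eq_or_lt_of_le ha with ha0 | ha0
  · rw [← ha0]
    simp only [zero_sub, zero_mul, zero_sub]  -- simplify a bit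
    nlinarith [hb0]
  · have key := myPhi_nonneg (show 0 < a / b by positivity)
    have hbne : b ≠ 0 := hb0.ne'
    have hlog : Real.log (a / b) = Real.log a - Real.log b :=
      Real.log_div ha0.ne' hbne
    have key2 : 0 ≤ myPhi (a / b) * b ^ 2 := by positivity
    rw [myPhi, hlog] at key2
    have e : ((a / b + 2) * (a / b * (Real.log a - Real.log b) - a / b + 1) -
        3 / 2 * (a / b - 1) ^ 2) * b ^ 2
        = (a + 2 * b) * (a * (Real.log a - Real.log b) - a + b) -
          (3 / 2) * (a - b) ^ 2 := by
      field_simp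
    rw [e] at key2
    nlinarith [key2]

lemma finite_pinsker {U : Type*} [Fintype U] (p q : U → ℝ)
    (hp0 : ∀ u, 0 ≤ p u) (hq0 : ∀ u, 0 ≤ q u)
    (hp1 : ∑ u, p u = 1) (hq1 : ∑ u, q u = 1)
    (hsupp : ∀ u, q u = 0 → p u = 0) :
    (∑ u, |p u - q u|) ^ 2 ≤ 2 * ∑ u, p u * (Real.log (p u) - Real.log (q u)) := by
  classical
  set F : U → ℝ := fun u => (2 / 3) * (p u + 2 * q u) with hF
  set K : U → ℝ := fun u => p u * (Real.log (p u) - Real.log (q u)) - p u + q u with hKdef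
  have hFnn : ∀ u, 0 ≤ F u := fun u => by
    have h1 := hp0 u; have h2 := hq0 u; simp only [hF]; positivity
  have hpt : ∀ u, (p u - q u) ^ 2 ≤ F u * K u := fun u =>
    pointwise_pinsker (hp0 u) (hq0 u) (hsupp u)
  have hKnn : ∀ u, 0 ≤ K u := by
    intro u
    rcases eq_or_lt_of_le (hq0 u) with h0 | h0
    · simp [hKdef, ← h0, hsupp u h0.symm]
    · have h1 := hpt u
      have hFpos : 0 < F u := by
        have h2 := hp0 u; simp only [hF]; positivity
      nlinarith [sq_nonneg (p u - q u)]
  have step1 : ∑ u, |p u - q u| ≤ ∑ u, Real.sqrt (F u) * Real.sqrt (K u) := by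
    apply Finset.sum_le_sum
    intro u _
    rw [← Real.sqrt_mul (hFnn u), ← Real.sqrt_sq_eq_abs]
    exact Real.sqrt_le_sqrt (hpt u)
  have step2 : (∑ u, Real.sqrt (F u) * Real.sqrt (K u)) ^ 2
      ≤ (∑ u, F u) * (∑ u, K u) := by
    calc (∑ u, Real.sqrt (F u) * Real.sqrt (K u)) ^ 2
        ≤ (∑ u, Real.sqrt (F u) ^ 2) * (∑ u, Real.sqrt (K u) ^ 2) :=
          Finset.sum_mul_sq_le_sq_mul_sq Finset.univ _ _
      _ = (∑ u, F u) * (∑ u, K u) := by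
          rw [Finset.sum_congr rfl fun u _ => Real.sq_sqrt (hFnn u),
              Finset.sum_congr rfl fun u _ => Real.sq_sqrt (hKnn u)]
  have hFsum : (∑ u, F u) = 2 := by
    simp only [hF]
    rw [← Finset.mul_sum, Finset.sum_add_distrib, ← Finset.mul_sum, hp1, hq1]
    norm_num
  have hKsum : (∑ u, K u) = ∑ u, p u * (Real.log (p u) - Real.log (q u)) := by
    simp only [hKdef]
    rw [Finset.sum_add_distrib, Finset.sum_sub_distrib, hp1, hq1]
    ring
  have h0 : 0 ≤ ∑ u, |p u - q u| := Finset.sum_nonneg fun u _ => abs_nonneg _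
  calc (∑ u, |p u - q u|) ^ 2
      ≤ (∑ u, Real.sqrt (F u) * Real.sqrt (K u)) ^ 2 := pow_le_pow_left₀ h0 step1 2
    _ ≤ (∑ u, F u) * (∑ u, K u) := step2
    _ = 2 * ∑ u, p u * (Real.log (p u) - Real.log (q u)) := by rw [hFsum, hKsum]




/-- the negative entropy `Ω(δ) = ∑_u δ(u) ln δ(u)` is 1-strongly convex on
the probability simplex of a finite nonempty set with respect to the ℓ¹-norm:
`Ω(tδ+(1-t)ξ) ≤ tΩ(δ) + (1-t)Ω(ξ) - (t(1-t)/2)‖δ-ξ‖₁²`. (Note `Real.log 0 = 0`, so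
`0 ln 0 = 0` holds automatically.) -/
theorem stmt_4 {U : Type*} [Fintype U] [Nonempty U]
    (Ω : (U → ℝ) → ℝ) (hΩ : ∀ δ, Ω δ = ∑ u, δ u * Real.log (δ u))
    (δ ξ : U → ℝ)
    (hδ0 : ∀ u, 0 ≤ δ u) (hδ1 : ∑ u, δ u = 1)
    (hξ0 : ∀ u, 0 ≤ ξ u) (hξ1 : ∑ u, ξ u = 1)
    (t : ℝ) (ht0 : 0 ≤ t) (ht1 : t ≤ 1) :
    Ω (fun u => t * δ u + (1 - t) * ξ u)
      ≤ t * Ω δ + (1 - t) * Ω ξ - (t * (1 - t) / 2) * (∑ u, |δ u - ξ u|) ^ 2 := by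
  rcases eq_or_lt_of_le ht0 with ht0' | ht0'
  · simp only [hΩ, ← ht0']
    simp
  rcases eq_or_lt_of_le ht1 with ht1' | ht1'
  · simp only [hΩ, ht1']
    simp
  -- now 0 < t < 1
  set m : U → ℝ := fun u => t * δ u + (1 - t) * ξ u with hm
  have hm0 : ∀ u, 0 ≤ m u := fun u => by
    have := hδ0 u; have := hξ0 u; have : (0:ℝ) ≤ 1 - t := by linarith
    simp only [hm]; positivity
  have hm1 : ∑ u, m u = 1 := by
    simp only [hm]
    rw [Finset.sum_add_distrib, ← Finset.mul_sum, ← Finset.mul_sum, hδ1, hξ1]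
    ring
  have hsuppδ : ∀ u, m u = 0 → δ u = 0 := by
    intro u h
    have h1 := mul_nonneg ht0 (hδ0 u)
    have h2 := mul_nonneg (by linarith : (0:ℝ) ≤ 1 - t) (hξ0 u)
    have : t * δ u = 0 := by simp only [hm] at h; linarith
    have := hδ0 u
    nlinarith
  have hsuppξ : ∀ u, m u = 0 → ξ u = 0 := by
    intro u h
    have h1 := mul_nonneg ht0 (hδ0 u)
    have h2 := mul_nonneg (by linarith : (0:ℝ) ≤ 1 - t) (hξ0 u)
    have h3 : (1 - t) * ξ u = 0 := by simp only [hm] at h; linarith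
    have := hξ0 u
    nlinarith
  -- the key identity
  have hid : t * Ω δ + (1 - t) * Ω ξ - Ω m
      = t * (∑ u, δ u * (Real.log (δ u) - Real.log (m u)))
        + (1 - t) * (∑ u, ξ u * (Real.log (ξ u) - Real.log (m u))) := by
    simp only [hΩ, Finset.mul_sum, ← Finset.sum_sub_distrib, ← Finset.sum_add_distrib]
    apply Finset.sum_congr rfl
    intro u _
    simp only [hm]
    ring
  have hA := finite_pinsker δ m hδ0 hm0 hδ1 hm1 hsuppδ
  have hB := finite_pinsker ξ m hξ0 hm0 hξ1 hm1 hsuppξ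
  have hdm : ∑ u, |δ u - m u| = (1 - t) * ∑ u, |δ u - ξ u| := by
    rw [Finset.mul_sum]
    apply Finset.sum_congr rfl
    intro u _
    rw [← abs_of_nonneg (by linarith : (0:ℝ) ≤ 1 - t), ← abs_mul]
    congr 1
    simp only [hm]
    ring
  have hxm : ∑ u, |ξ u - m u| = t * ∑ u, |δ u - ξ u| := by
    rw [Finset.mul_sum]
    apply Finset.sum_congr rfl
    intro u _
    rw [← abs_of_nonneg ht0, ← abs_mul, ← abs_neg]
    congr 1
    simp only [hm]
    ring
  rw [hdm] at hA
  rw [hxm] at hB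
  set S := ∑ u, |δ u - ξ u| with hS
  set A := ∑ u, δ u * (Real.log (δ u) - Real.log (m u)) with hAdef
  set B := ∑ u, ξ u * (Real.log (ξ u) - Real.log (m u)) with hBdef
  have h1 : t * ((1 - t) * S) ^ 2 ≤ t * (2 * A) :=
    mul_le_mul_of_nonneg_left hA ht0
  have h2 : (1 - t) * (t * S) ^ 2 ≤ (1 - t) * (2 * B) :=
    mul_le_mul_of_nonneg_left hB (by linarith)
  nlinarith [h1, h2, hid]
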